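/- Let T ∈ (0,1) and G ≥ 1. Suppose f : {-1,0,1}^G → ℝ is nonnegative, satisfies f(y) = 0 whenever y ≠ 0 and every nonzero coordinate of y equals -1 (no-free-lunch), and satisfies for every index i and every fixed choice of the other coordinates: T·f(...,1,...) + (1-T)·f(...,-1,...) = f(...,0,...). Then f(y) = 0 for every y having at least one coordinate equal to -1. -/
import Mathlib


/-- nonnegativity, no-free-lunch and the coordinatewise incentive identity force
zero payment whenever at least one answer is incorrect. -/
theorem zero_payment_of_incorrect
    (G : ℕ) (hG : 1 ≤ G) (T : ℝ) (hT0 : 0 < T) (hT1 : T < 1)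
    (f : (Fin G → ℤ) → ℝ)
    (hnonneg : ∀ y : Fin G → ℤ, (∀ j, y j = -1 ∨ y j = 0 ∨ y j = 1) → 0 ≤ f y)
    (hnfl : ∀ y : Fin G → ℤ, (∀ j, y j = -1 ∨ y j = 0 ∨ y j = 1) →
        (∃ j, y j ≠ 0) → (∀ j, y j ≠ 0 → y j = -1) → f y = 0)
    (hid : ∀ y : Fin G → ℤ, (∀ j, y j = -1 ∨ y j = 0 ∨ y j = 1) → ∀ i,
        T * f (Function.update y i 1) + (1 - T) * f (Function.update y i (-1))
          = f (Function.update y i 0)) :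
    ∀ y : Fin G → ℤ, (∀ j, y j = -1 ∨ y j = 0 ∨ y j = 1) → (∃ j, y j = -1) → f y = 0 := by
  suffices H : ∀ n, ∀ y : Fin G → ℤ,
      (Finset.univ.filter fun j => y j = 1).card = n →
      (∀ j, y j = -1 ∨ y j = 0 ∨ y j = 1) → (∃ j, y j = -1) → f y = 0 by
    exact fun y hy hex => H _ y rfl hy hex
  intro n
  induction n with
  | zero =>
    intro y hcard hy hex
    obtain ⟨j, hj⟩ := hex
    apply hnfl y hy ⟨j, by simp [hj]⟩
    intro k hk
    rcases hy k with h | h | h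
    · exact h
    · exact absurd h hk
    · exfalso
      have hmem : k ∈ Finset.univ.filter fun j => y j = 1 := by simp [h]
      rw [Finset.card_eq_zero] at hcard
      simp [hcard] at hmem
  | succ n ih =>
    intro y hcard hy hex
    obtain ⟨j, hj⟩ := hex
    have hne : (Finset.univ.filter fun j => y j = 1).Nonempty := by
      rw [← Finset.card_pos, hcard]; omega
    obtain ⟨i, hi⟩ := hne
    simp only [Finset.mem_filter, Finset.mem_univ, true_and] at hi
    have hij : i ≠ j := by intro h; rw [h, hj] at hi; omega
    have hupd : ∀ c : ℤ, c ≠ 1 →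
        (Finset.univ.filter fun k => Function.update y i c k = 1)
          = (Finset.univ.filter fun k => y k = 1).erase i := by
      intro c hc
      ext k
      simp only [Finset.mem_filter, Finset.mem_univ, true_and, Finset.mem_erase]
      by_cases hk : k = i
      · subst hk; simp [Function.update_self, hc]
      · simp [Function.update_of_ne hk, hk]
    have hcard' : ∀ c : ℤ, c ≠ 1 →
        (Finset.univ.filter fun k => Function.update y i c k = 1).card = n := by
      intro c hc
      rw [hupd c hc, Finset.card_erase_of_mem (by simp [hi]), hcard]; omega
    have hrange : ∀ c : ℤ, (c = -1 ∨ c = 0 ∨ c = 1) → ∀ k,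
        Function.update y i c k = -1 ∨ Function.update y i c k = 0 ∨
          Function.update y i c k = 1 := by
      intro c hc k
      by_cases hk : k = i
      · subst hk; simpa using hc
      · simpa [Function.update_of_ne hk] using hy k
    have hexu : ∀ c : ℤ, ∃ k, Function.update y i c k = -1 :=
      fun c => ⟨j, by simp [Function.update_of_ne (Ne.symm hij), hj]⟩
    have h0 : f (Function.update y i 0) = 0 :=
      ih _ (hcard' 0 (by norm_num)) (hrange 0 (by norm_num)) (hexu 0)
    have hm1 : f (Function.update y i (-1)) = 0 :=
      ih _ (hcard' (-1) (by norm_num)) (hrange (-1) (by norm_num)) (hexu (-1))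
    have hid' := hid y hy i
    have heq : Function.update y i 1 = y := by rw [← hi]; exact Function.update_eq_self i y
    rw [heq, h0, hm1] at hid'
    have : T * f y = 0 := by linarith
    exact (mul_eq_zero.mp this).resolve_left (ne_of_gt hT0)
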